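/- arXiv:2602.02066 — 5 statements merged into one kernel-verified Lean document; each statement's English description precedes it below -/
import Mathlib

section
/- Let X_1,…,X_n be independent uniformly distributed points on the circle [0,1] and P_n = {X_1,…,X_n}. Then for 1 ≤ p < ∞, E[‖dist(·, P_n)‖_{L_p}^p] = 2^{−p} · n!/((p+1)(p+2)⋯(p+n)). In particular, for fixed x ∈ [0,1], E[dist(x, P_n)^p] = 2^{−p} · n!/((p+1)⋯(p+n)). -/
open MeasureTheory Set
open scoped ENNReal

/-- Distance on the circle (1-dimensional torus) `[0,1]`. -/
noncomputable def tdist (x y : ℝ) : ℝ := ⨅ k : ℤ, |x + (k : ℝ) - y|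

lemma round_min (r : ℝ) (m : ℤ) : |r - round r| ≤ |r - m| := by
  rcases eq_or_ne m (round r) with h | h
  · rw [h]
  · have h1 : (1:ℝ) ≤ |(round r : ℝ) - m| := by
      have h0 := Int.one_le_abs (sub_ne_zero.2 (Ne.symm h))
      calc (1:ℝ) ≤ |((round r - m : ℤ) : ℝ)| := by exact_mod_cast h0
        _ = |(round r : ℝ) - m| := by push_cast; rfl
    have h2 := abs_sub_round r
    have h3 : |(round r : ℝ) - m| ≤ |(round r : ℝ) - r| + |r - m| := abs_sub_le _ _ _
    have h4 : |(round r : ℝ) - r| = |r - round r| := abs_sub_comm _ _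
    linarith

lemma tdist_bdd (x y : ℝ) : BddBelow (Set.range fun k : ℤ => |x + (k : ℝ) - y|) :=
  ⟨0, by rintro z ⟨k, rfl⟩; exact abs_nonneg _⟩

lemma tdist_eq (x y : ℝ) : tdist x y = |(x - y) - round (x - y)| := by
  unfold tdist
  apply le_antisymm
  · have h : |x + ((-round (x - y) : ℤ) : ℝ) - y| = |(x - y) - round (x - y)| := by
      push_cast; ring_nf
    exact h ▸ ciInf_le (tdist_bdd x y) (-round (x - y))
  · apply le_ciInf; intro k
    have h := round_min (x - y) (-k)
    have h2 : |(x - y) - ((-k : ℤ) : ℝ)| = |x + (k : ℝ) - y| := by push_cast; ring_nf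
    linarith [h2 ▸ h]

lemma tdist_nonneg' (x y : ℝ) : 0 ≤ tdist x y := by rw [tdist_eq]; exact abs_nonneg _

lemma tdist_le_half (x y : ℝ) : tdist x y ≤ 1/2 := by rw [tdist_eq]; exact abs_sub_round _

lemma d2i_lipschitz : LipschitzWith 1 (fun r : ℝ => |r - round r|) := by
  rw [lipschitzWith_iff_dist_le_mul]
  intro a b
  simp only [Real.dist_eq, NNReal.coe_one, one_mul]
  have hab : |a - round a| ≤ |a - b| + |b - round b| :=
    (round_min a (round b)).trans (abs_sub_le _ _ _)
  have hba : |b - round b| ≤ |b - a| + |a - round a| :=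
    (round_min b (round a)).trans (abs_sub_le _ _ _)
  rw [abs_sub_le_iff]
  have hc : |b - a| = |a - b| := abs_sub_comm b a
  constructor <;> linarith

lemma tdist_continuous : Continuous (fun q : ℝ × ℝ => tdist q.1 q.2) := by
  simp_rw [tdist_eq]
  exact d2i_lipschitz.continuous.comp (continuous_fst.sub continuous_snd)

lemma tdist_continuous' (x : ℝ) : Continuous (fun y => tdist x y) :=
  tdist_continuous.comp (continuous_const.prodMk continuous_id)

lemma d2i_eq_min {r : ℝ} (hr : |r| ≤ 1) : |r - round r| = min |r| (1 - |r|) := by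
  have hb := abs_sub_round r
  have hi1 : -1 ≤ round r := by
    have : (-2 : ℝ) < (round r : ℝ) := by
      have := abs_le.1 hb; have := abs_le.1 hr; push_cast; linarith
    have : (-2 : ℤ) < round r := by exact_mod_cast this
    omega
  have hi2 : round r ≤ 1 := by
    have : (round r : ℝ) < 2 := by
      have := abs_le.1 hb; have := abs_le.1 hr; push_cast; linarith
    have : round r < (2 : ℤ) := by exact_mod_cast this
    omega
  have hr' := abs_le.1 hr
  interval_cases h : round r
  · -- round r = -1
    have hb' := abs_le.1 hb
    push_cast at hb hb' ⊢
    have h1 : r ≤ -1/2 := by linarith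
    rw [abs_of_nonpos (by linarith : r ≤ 0), abs_of_nonneg (by linarith : 0 ≤ r - (-1)),
      min_eq_right (by linarith)]
    ring
  · -- round r = 0
    push_cast at hb ⊢
    rw [sub_zero] at hb ⊢
    rw [min_eq_left (by linarith : |r| ≤ 1 - |r|)]
  · -- round r = 1
    have hb' := abs_le.1 hb
    push_cast at hb hb' ⊢
    have h1 : 1/2 ≤ r := by linarith
    rw [abs_of_nonneg (by linarith : 0 ≤ r), abs_of_nonpos (by linarith : r - 1 ≤ 0),
      min_eq_right (by linarith)]
    ring

lemma tdist_lt_iff {x y t : ℝ} (hx : x ∈ Icc (0:ℝ) 1) (hy : y ∈ Icc (0:ℝ) 1)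
    (ht : 0 ≤ t) (ht2 : t < 1/2) :
    t < tdist x y ↔ y ∈ Ioo (x-1+t) (x-t) ∪ Ioo (x+t) (x+1-t) := by
  obtain ⟨hx1, hx2⟩ := hx
  obtain ⟨hy1, hy2⟩ := hy
  have h1 : |x - y| ≤ 1 := abs_le.2 ⟨by linarith, by linarith⟩
  rw [tdist_eq, d2i_eq_min h1, lt_min_iff]
  constructor
  · rintro ⟨h2, h3⟩
    have habs := abs_lt.1 (by linarith : |x - y| < 1 - t)
    rcases lt_abs.1 h2 with h | h
    · left; exact ⟨by linarith [habs.2], by linarith⟩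
    · right; exact ⟨by linarith, by linarith [habs.1]⟩
  · rintro (⟨h2, h3⟩ | ⟨h2, h3⟩)
    · exact ⟨lt_abs.2 (Or.inl (by linarith)), by rw [abs_of_nonneg (by linarith : (0:ℝ) ≤ x - y)]; linarith⟩
    · exact ⟨lt_abs.2 (Or.inr (by linarith)), by rw [abs_of_nonpos (by linarith : x - y ≤ 0)]; linarith⟩

lemma vol_Ioo_inter (a b : ℝ) :
    volume (Ioo a b ∩ Icc (0:ℝ) 1) = ENNReal.ofReal (min b 1 - max a 0) := by
  apply le_antisymm
  · calc volume (Ioo a b ∩ Icc (0:ℝ) 1) ≤ volume (Icc (max a 0) (min b 1)) := by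
          apply measure_mono
          rintro y ⟨⟨h1, h2⟩, ⟨h3, h4⟩⟩
          exact ⟨max_le h1.le h3, le_min h2.le h4⟩
      _ = ENNReal.ofReal (min b 1 - max a 0) := Real.volume_Icc
  · calc ENNReal.ofReal (min b 1 - max a 0) = volume (Ioo (max a 0) (min b 1)) :=
          Real.volume_Ioo.symm
      _ ≤ volume (Ioo a b ∩ Icc (0:ℝ) 1) := by
          apply measure_mono
          rintro y ⟨h1, h2⟩
          have ha := (le_max_left a 0).trans_lt h1
          have h0 := (le_max_right a 0).trans_lt h1
          have hb := h2.trans_le (min_le_left b 1)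
          have h1' := h2.trans_le (min_le_right b 1)
          exact ⟨⟨ha, hb⟩, ⟨h0.le, h1'.le⟩⟩

lemma onedim_measure {x t : ℝ} (hx : x ∈ Icc (0:ℝ) 1) (ht : 0 < t) (ht2 : t < 1/2) :
    volume.restrict (Icc (0:ℝ) 1) {y | t < tdist x y} = ENNReal.ofReal (1 - 2*t) := by
  have hmeas : MeasurableSet {y : ℝ | t < tdist x y} :=
    measurableSet_lt measurable_const (tdist_continuous' x).measurable
  rw [Measure.restrict_apply hmeas]
  have hset : {y | t < tdist x y} ∩ Icc (0:ℝ) 1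
      = (Ioo (x-1+t) (x-t) ∪ Ioo (x+t) (x+1-t)) ∩ Icc (0:ℝ) 1 := by
    ext y
    constructor
    · rintro ⟨h1, h2⟩
      exact ⟨(tdist_lt_iff hx h2 ht.le ht2).1 h1, h2⟩
    · rintro ⟨h1, h2⟩
      exact ⟨(tdist_lt_iff hx h2 ht.le ht2).2 h1, h2⟩
  rw [hset, union_inter_distrib_right, measure_union ?hd ?hm, vol_Ioo_inter, vol_Ioo_inter]
  case hd =>
    rw [Set.disjoint_left]
    rintro y ⟨⟨_, h1⟩, _⟩ ⟨⟨h2, _⟩, _⟩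
    linarith
  case hm => exact (measurableSet_Ioo.inter measurableSet_Icc)
  obtain ⟨hx1, hx2⟩ := hx
  have hmax2 : max (x+t) 0 = x + t := max_eq_left (by linarith)
  have hmin1 : min (x-t) 1 = x - t := min_eq_left (by linarith)
  rcases le_or_gt x t with h | h
  · have e1 : max (x-1+t) 0 = 0 := max_eq_right (by linarith)
    have e2 : min (x+1-t) 1 = x+1-t := min_eq_left (by linarith)
    rw [e1, e2, hmax2, hmin1, ENNReal.ofReal_of_nonpos (by linarith : x - t - 0 ≤ 0), zero_add]
    congr 1; ring
  · rcases lt_or_ge x (1-t) with h2 | h2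
    · have e1 : max (x-1+t) 0 = 0 := max_eq_right (by linarith)
      have e2 : min (x+1-t) 1 = 1 := min_eq_right (by linarith)
      rw [e1, e2, hmax2, hmin1, sub_zero,
        ← ENNReal.ofReal_add (by linarith) (by linarith)]
      congr 1; ring
    · have e1 : max (x-1+t) 0 = x-1+t := max_eq_left (by linarith)
      have e2 : min (x+1-t) 1 = 1 := min_eq_right (by linarith)
      rw [e1, e2, hmax2, hmin1,
        ENNReal.ofReal_of_nonpos (by linarith : 1 - (x+t) ≤ 0), add_zero]
      congr 1; ring

lemma iInf_tdist_bdd (x : ℝ) {n : ℕ} (ω : Fin n → ℝ) :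
    BddBelow (Set.range fun i => tdist x (ω i)) :=
  ⟨0, by rintro z ⟨i, rfl⟩; exact tdist_nonneg' _ _⟩

lemma tail_measure {n : ℕ} (hn : 0 < n) {x : ℝ} (hx : x ∈ Icc (0:ℝ) 1) {t : ℝ} (ht : 0 < t) :
    (Measure.pi fun _ : Fin n => volume.restrict (Icc (0:ℝ) 1))
        {ω | t < ⨅ i, tdist x (ω i)}
      = (ENNReal.ofReal (1 - 2*t)) ^ n := by
  haveI : NeZero n := ⟨hn.ne'⟩
  rcases lt_or_ge t (1/2) with ht2 | ht2
  · have hset : {ω : Fin n → ℝ | t < ⨅ i, tdist x (ω i)}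
        = Set.pi Set.univ (fun _ : Fin n => {y | t < tdist x y}) := by
      ext ω
      simp only [mem_setOf_eq, Set.mem_pi, Set.mem_univ, forall_true_left]
      constructor
      · intro h i
        exact h.trans_le (ciInf_le (iInf_tdist_bdd x ω) i)
      · intro h
        obtain ⟨i, hi⟩ := exists_eq_ciInf_of_finite (f := fun i => tdist x (ω i))
        rw [← hi]
        exact h i
    rw [hset, Measure.pi_pi]
    simp [onedim_measure hx ht ht2]
  · have hset : {ω : Fin n → ℝ | t < ⨅ i, tdist x (ω i)} = ∅ := by
      ext ω
      simp only [mem_setOf_eq, Set.mem_empty_iff_false, iff_false, not_lt]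
      calc (⨅ i, tdist x (ω i)) ≤ tdist x (ω 0) := ciInf_le (iInf_tdist_bdd x ω) 0
        _ ≤ 1/2 := tdist_le_half _ _
        _ ≤ t := ht2
    rw [hset]
    simp [ENNReal.ofReal_of_nonpos (by linarith : 1 - 2*t ≤ 0), zero_pow hn.ne']

lemma beta_real (n : ℕ) (p : ℝ) (hp : 0 < p) :
    ∫ u in (0:ℝ)..1, u ^ (p - 1) * (1 - u) ^ n
      = (n.factorial : ℝ) / (p * ∏ i ∈ Finset.range n, (p + ((i : ℝ) + 1))) := by
  have h1 : Complex.betaIntegral (p : ℂ) ((n : ℂ) + 1)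
      = ((∫ u in (0:ℝ)..1, u ^ (p - 1) * (1 - u) ^ n : ℝ) : ℂ) := by
    rw [← intervalIntegral.integral_ofReal]
    unfold Complex.betaIntegral
    apply intervalIntegral.integral_congr
    intro u hu
    rw [Set.uIcc_of_le (by norm_num : (0:ℝ) ≤ 1)] at hu
    obtain ⟨hu0, hu1⟩ := hu
    have e1 : ((u : ℂ)) ^ ((p : ℂ) - 1) = ((u ^ (p - 1) : ℝ) : ℂ) := by
      rw [Complex.ofReal_cpow hu0]
      push_cast
      ring_nf
    have e2 : (1 - (u : ℂ)) ^ ((n : ℂ) + 1 - 1) = (((1 - u) ^ n : ℝ) : ℂ) := by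
      rw [add_sub_cancel_right, Complex.cpow_natCast]
      push_cast
      ring_nf
    show (u : ℂ) ^ ((p : ℂ) - 1) * (1 - (u : ℂ)) ^ ((n : ℂ) + 1 - 1)
      = ((u ^ (p - 1) * (1 - u) ^ n : ℝ) : ℂ)
    rw [e1, e2]
    push_cast
    ring
  have h2 := Complex.betaIntegral_eval_nat_add_one_right
    (u := (p : ℂ)) (by simpa using hp) n
  rw [h1] at h2
  have h3 : ((n.factorial : ℂ) : ℂ) / ∏ j ∈ Finset.range (n + 1), ((p : ℂ) + j)
      = (((n.factorial : ℝ) / (p * ∏ i ∈ Finset.range n, (p + ((i : ℝ) + 1))) : ℝ) : ℂ) := by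
    rw [Finset.prod_range_succ']
    push_cast
    ring
  rw [h3] at h2
  exact_mod_cast h2

lemma R_eval (n : ℕ) (p : ℝ) (hp : 1 ≤ p) :
    ∫ t in Ioc (0:ℝ) (1/2), (1 - 2*t) ^ n * (p * t ^ (p-1))
      = (2:ℝ) ^ (-p) * (n.factorial : ℝ) / ∏ i ∈ Finset.range n, (p + ((i : ℝ) + 1)) := by
  have hp0 : 0 < p := lt_of_lt_of_le one_pos hp
  rw [← intervalIntegral.integral_of_le (by norm_num : (0:ℝ) ≤ 1/2)]
  set f : ℝ → ℝ := fun u => (1 - u) ^ n * (p * (u/2) ^ (p-1)) with hf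
  have hfun : ∀ t : ℝ, (1 - 2*t) ^ n * (p * t ^ (p-1)) = f (2*t) := by
    intro t
    simp only [hf]
    rw [mul_div_cancel_left₀ t (two_ne_zero)]
  simp_rw [hfun]
  rw [intervalIntegral.integral_comp_mul_left f (two_ne_zero)]
  rw [show (2:ℝ) * 0 = 0 by ring, show (2:ℝ) * (1/2) = 1 by ring]
  have hcong : ∫ u in (0:ℝ)..1, f u
      = (p * ((2:ℝ) ^ (p-1))⁻¹) * ∫ u in (0:ℝ)..1, u ^ (p-1) * (1-u) ^ n := by
    rw [← intervalIntegral.integral_const_mul]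
    apply intervalIntegral.integral_congr
    intro u hu
    rw [Set.uIcc_of_le (by norm_num : (0:ℝ) ≤ 1)] at hu
    simp only [hf]
    rw [Real.div_rpow hu.1 (by norm_num : (0:ℝ) ≤ 2), div_eq_mul_inv]
    ring
  rw [hcong, beta_real n p hp0]
  have h2 : ((2:ℝ) ^ (p-1)) ≠ 0 := (Real.rpow_pos_of_pos two_pos _).ne'
  have hprod : (∏ i ∈ Finset.range n, (p + ((i:ℝ)+1))) ≠ 0 :=
    (Finset.prod_pos (fun i _ => by positivity)).ne'
  rw [Real.rpow_neg (by norm_num : (0:ℝ) ≤ 2) p]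
  have hpow : (2:ℝ) ^ p = 2 ^ (p-1) * 2 := by
    rw [← Real.rpow_add_one (by norm_num : (2:ℝ) ≠ 0) (p-1)]
    ring_nf
  rw [smul_eq_mul, hpow]
  field_simp

lemma part1 (n : ℕ) (hn : 0 < n) (p : ℝ) (hp : 1 ≤ p) {x : ℝ} (hx : x ∈ Icc (0:ℝ) 1) :
    (∫ ω : Fin n → ℝ, (⨅ i, tdist x (ω i)) ^ p
        ∂(Measure.pi fun _ : Fin n => volume.restrict (Icc (0:ℝ) 1)))
      = (2:ℝ) ^ (-p) * (n.factorial : ℝ) / ∏ i ∈ Finset.range n, (p + ((i:ℝ)+1)) := by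
  haveI : NeZero n := ⟨hn.ne'⟩
  have hp0 : 0 < p := lt_of_lt_of_le one_pos hp
  set μ := Measure.pi fun _ : Fin n => volume.restrict (Icc (0:ℝ) 1) with hμ
  set F : (Fin n → ℝ) → ℝ := fun ω => ⨅ i, tdist x (ω i) with hF
  have hFm : Measurable F :=
    Measurable.iInf (fun i => (tdist_continuous' x).measurable.comp (measurable_pi_apply i))
  have hFnn : ∀ ω, 0 ≤ F ω := fun ω => le_ciInf fun i => tdist_nonneg' _ _
  have g_intble : ∀ t > (0:ℝ), IntervalIntegrable (fun s => p * s ^ (p-1)) volume 0 t :=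
    fun t _ => (intervalIntegral.intervalIntegrable_rpow' (by linarith)).const_mul p
  have g_nn : ∀ᵐ s ∂(volume.restrict (Ioi (0:ℝ))), 0 ≤ p * s ^ (p-1) := by
    filter_upwards [ae_restrict_mem measurableSet_Ioi] with s hs
    exact mul_nonneg (by linarith) (Real.rpow_nonneg (le_of_lt hs) _)
  have lc := lintegral_comp_eq_lintegral_meas_lt_mul μ (ae_of_all _ hFnn)
    hFm.aemeasurable g_intble g_nn
  have lhs_eq : ∫⁻ ω, ENNReal.ofReal (∫ s in (0:ℝ)..F ω, p * s ^ (p-1)) ∂μ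
      = ∫⁻ ω, ENNReal.ofReal ((F ω) ^ p) ∂μ := by
    apply lintegral_congr; intro ω
    congr 1
    rw [intervalIntegral.integral_const_mul,
      integral_rpow (Or.inl (by linarith : (-1:ℝ) < p - 1))]
    have hpe : p - 1 + 1 = p := by ring
    rw [hpe, Real.zero_rpow hp0.ne', sub_zero, mul_comm, div_mul_cancel₀ _ hp0.ne']
  have int_eq : ∫ ω, (F ω) ^ p ∂μ = (∫⁻ ω, ENNReal.ofReal ((F ω) ^ p) ∂μ).toReal :=
    integral_eq_lintegral_of_nonneg_ae (ae_of_all _ fun ω => Real.rpow_nonneg (hFnn ω) p)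
      ((Real.continuous_rpow_const hp0.le).measurable.comp hFm).aestronglyMeasurable
  have tail_eq : ∫⁻ s in Ioi (0:ℝ), μ {ω | s < F ω} * ENNReal.ofReal (p * s ^ (p-1))
      = ∫⁻ s in Ioi (0:ℝ), (ENNReal.ofReal (1 - 2*s)) ^ n * ENNReal.ofReal (p * s ^ (p-1)) := by
    apply setLIntegral_congr_fun measurableSet_Ioi
    intro s hs
    beta_reduce
    rw [hμ, hF]
    rw [tail_measure hn hx hs]
  have vanish : ∫⁻ s in Ioi ((1:ℝ)/2),
      (ENNReal.ofReal (1 - 2*s)) ^ n * ENNReal.ofReal (p * s ^ (p-1)) = 0 := by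
    rw [setLIntegral_congr_fun measurableSet_Ioi
      (fun s (hs : s ∈ Ioi ((1:ℝ)/2)) => ?_), lintegral_zero]
    show (ENNReal.ofReal (1 - 2*s)) ^ n * ENNReal.ofReal (p * s ^ (p-1)) = (fun _ => (0:ℝ≥0∞)) s
    have hs' : (1:ℝ)/2 < s := hs
    rw [ENNReal.ofReal_of_nonpos (by linarith : 1 - 2*s ≤ 0), zero_pow hn.ne', zero_mul]
  have split : ∫⁻ s in Ioi (0:ℝ),
        (ENNReal.ofReal (1 - 2*s)) ^ n * ENNReal.ofReal (p * s ^ (p-1))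
      = ∫⁻ s in Ioc (0:ℝ) (1/2),
        (ENNReal.ofReal (1 - 2*s)) ^ n * ENNReal.ofReal (p * s ^ (p-1)) := by
    rw [← Ioc_union_Ioi_eq_Ioi (by norm_num : (0:ℝ) ≤ 1/2),
      lintegral_union measurableSet_Ioi (Ioc_disjoint_Ioi le_rfl), vanish, add_zero]
  have inner_eq : ∫⁻ s in Ioc (0:ℝ) (1/2),
        (ENNReal.ofReal (1 - 2*s)) ^ n * ENNReal.ofReal (p * s ^ (p-1))
      = ∫⁻ s in Ioc (0:ℝ) (1/2), ENNReal.ofReal ((1 - 2*s) ^ n * (p * s ^ (p-1))) := by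
    apply setLIntegral_congr_fun measurableSet_Ioc
    intro s hs
    beta_reduce
    obtain ⟨hs1, hs2⟩ := hs
    rw [← ENNReal.ofReal_pow (by linarith : 0 ≤ 1 - 2*s),
      ← ENNReal.ofReal_mul (pow_nonneg (by linarith) n)]
  have hIn : IntegrableOn (fun s => (1 - 2*s) ^ n * (p * s ^ (p-1))) (Ioc (0:ℝ) (1/2)) volume := by
    rw [← intervalIntegrable_iff_integrableOn_Ioc_of_le (by norm_num : (0:ℝ) ≤ 1/2)]
    exact ((intervalIntegral.intervalIntegrable_rpow' (by linarith)).const_mul p).continuousOn_mul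
      (Continuous.continuousOn (by continuity))
  have hInn : 0 ≤ᵐ[volume.restrict (Ioc (0:ℝ) (1/2))]
      fun s => (1 - 2*s) ^ n * (p * s ^ (p-1)) := by
    filter_upwards [ae_restrict_mem measurableSet_Ioc] with s hs
    obtain ⟨hs1, hs2⟩ := hs
    exact mul_nonneg (pow_nonneg (by linarith) n)
      (mul_nonneg hp0.le (Real.rpow_nonneg hs1.le _))
  have ofreal_eq : ∫⁻ s in Ioc (0:ℝ) (1/2), ENNReal.ofReal ((1 - 2*s) ^ n * (p * s ^ (p-1)))
      = ENNReal.ofReal (∫ s in Ioc (0:ℝ) (1/2), (1 - 2*s) ^ n * (p * s ^ (p-1))) :=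
    (ofReal_integral_eq_lintegral_ofReal hIn hInn).symm
  have final_nn : 0 ≤ ∫ s in Ioc (0:ℝ) (1/2), (1 - 2*s) ^ n * (p * s ^ (p-1)) :=
    setIntegral_nonneg measurableSet_Ioc fun s hs =>
      mul_nonneg (pow_nonneg (by linarith [hs.2]) n)
        (mul_nonneg hp0.le (Real.rpow_nonneg hs.1.le _))
  calc ∫ ω, (F ω) ^ p ∂μ
      = (∫⁻ ω, ENNReal.ofReal ((F ω) ^ p) ∂μ).toReal := int_eq
    _ = (∫⁻ s in Ioi (0:ℝ), μ {ω | s < F ω} * ENNReal.ofReal (p * s ^ (p-1))).toReal := by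
        rw [← lc, lhs_eq]
    _ = (ENNReal.ofReal (∫ s in Ioc (0:ℝ) (1/2), (1 - 2*s) ^ n * (p * s ^ (p-1)))).toReal := by
        rw [tail_eq, split, inner_eq, ofreal_eq]
    _ = ∫ s in Ioc (0:ℝ) (1/2), (1 - 2*s) ^ n * (p * s ^ (p-1)) :=
        ENNReal.toReal_ofReal final_nn
    _ = (2:ℝ) ^ (-p) * (n.factorial : ℝ) / ∏ i ∈ Finset.range n, (p + ((i:ℝ)+1)) :=
        R_eval n p hp

/-- For `n` i.i.d. uniform points `X_1,…,X_n` on the circle `[0,1]` and `1 ≤ p < ∞`: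
pointwise `E[dist(x, P_n)^p] = 2^{-p}·n!/((p+1)⋯(p+n))` for every `x ∈ [0,1]`, and
consequently `E[‖dist(·, P_n)‖_{L_p}^p] = 2^{-p}·n!/((p+1)⋯(p+n))`. -/
theorem stmt3 (n : ℕ) (hn : 0 < n) (p : ℝ) (hp : 1 ≤ p) :
    (∀ x ∈ Icc (0:ℝ) 1,
      (∫ ω : Fin n → ℝ, (⨅ i, tdist x (ω i)) ^ p
          ∂(Measure.pi fun _ : Fin n => volume.restrict (Icc (0:ℝ) 1)))
        = (2 : ℝ) ^ (-p) * (n.factorial : ℝ) /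
            ∏ i ∈ Finset.range n, (p + ((i : ℝ) + 1))) ∧
    ((∫ ω : Fin n → ℝ, (∫ x in Icc (0:ℝ) 1, (⨅ i, tdist x (ω i)) ^ p)
          ∂(Measure.pi fun _ : Fin n => volume.restrict (Icc (0:ℝ) 1)))
        = (2 : ℝ) ^ (-p) * (n.factorial : ℝ) /
            ∏ i ∈ Finset.range n, (p + ((i : ℝ) + 1))) := by
  have hp0 : 0 < p := lt_of_lt_of_le one_pos hp
  constructor
  · intro x hx
    exact part1 n hn p hp hx
  · haveI : NeZero n := ⟨hn.ne'⟩
    haveI prob : IsProbabilityMeasure (volume.restrict (Icc (0:ℝ) 1)) := ⟨by simp⟩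
    set μ := Measure.pi fun _ : Fin n => volume.restrict (Icc (0:ℝ) 1) with hμ
    haveI : IsProbabilityMeasure μ := by rw [hμ]; infer_instance
    have hswap : (∫ ω : Fin n → ℝ, (∫ x in Icc (0:ℝ) 1, (⨅ i, tdist x (ω i)) ^ p) ∂μ)
        = ∫ x in Icc (0:ℝ) 1, (∫ ω : Fin n → ℝ, (⨅ i, tdist x (ω i)) ^ p ∂μ) := by
      apply integral_integral_swap
      have hm : Measurable (Function.uncurry
          fun (ω : Fin n → ℝ) (x : ℝ) => (⨅ i, tdist x (ω i)) ^ p) := by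
        apply (Real.continuous_rpow_const hp0.le).measurable.comp
        exact Measurable.iInf fun i =>
          (tdist_continuous.comp (continuous_snd.prodMk
            ((continuous_apply i).comp continuous_fst))).measurable
      apply (integrable_const (1:ℝ)).mono' hm.aestronglyMeasurable
      apply ae_of_all
      rintro ⟨ω, x⟩
      have hnn : 0 ≤ ⨅ i, tdist x (ω i) := le_ciInf fun i => tdist_nonneg' _ _
      have hle : (⨅ i, tdist x (ω i)) ≤ 1 :=
        ((ciInf_le (iInf_tdist_bdd x ω) 0).trans (tdist_le_half _ _)).trans (by norm_num)
      simp only [Function.uncurry, Real.norm_eq_abs, abs_of_nonneg (Real.rpow_nonneg hnn p)]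
      exact Real.rpow_le_one hnn hle hp0.le
    rw [hswap]
    rw [setIntegral_congr_fun measurableSet_Icc
      (fun x hx => part1 n hn p hp hx)]
    simp
end

section
/- Auerbach-type lemma: Let D be a set and V_n ⊂ B(D) an n-dimensional subspace of bounded complex-valued functions on D. Then for every ε > 0 there exist functions φ_1,…,φ_n ∈ V_n and points x_1,…,x_n ∈ D such that ‖φ_i‖_∞ ≤ 1 + ε and φ_i(x_j) = δ_{ij} for all i, j. -/
open Set

/-- Auerbach-type lemma: if `V` is an `n`-dimensional subspace of the bounded complex-valued
functions on a set `D`, then for every `ε > 0` there are `φ_1,…,φ_n ∈ V` and points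
`x_1,…,x_n ∈ D` with `‖φ_i‖_∞ ≤ 1 + ε` and `φ_i(x_j) = δ_{ij}`. -/
theorem stmt5 {D : Type*} (n : ℕ) (V : Submodule ℂ (D → ℂ))
    (hdim : Module.finrank ℂ V = n)
    (hbdd : ∀ f ∈ V, ∃ C : ℝ, ∀ x, ‖f x‖ ≤ C)
    (ε : ℝ) (hε : 0 < ε) :
    ∃ (φ : Fin n → (D → ℂ)) (x : Fin n → D),
      (∀ i, φ i ∈ V) ∧
      (∀ i y, ‖φ i y‖ ≤ 1 + ε) ∧
      (∀ i j, φ i (x j) = if i = j then 1 else 0) := by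
  classical
  rcases Nat.eq_zero_or_pos n with rfl | hn
  · exact ⟨Fin.elim0, Fin.elim0, fun i => i.elim0, fun i => i.elim0, fun i => i.elim0⟩
  haveI : FiniteDimensional ℂ V := FiniteDimensional.of_finrank_pos (hdim ▸ hn)
  let b : Module.Basis (Fin n) ℂ V := Module.finBasisOfFinrankEq ℂ V hdim
  set F : Fin n → D → ℂ := fun i => ((b i : V) : D → ℂ) with hF
  have hFmem : ∀ i, F i ∈ V := fun i => (b i).2
  let M : (Fin n → D) → Matrix (Fin n) (Fin n) ℂ := fun x => Matrix.of fun i j => F i (x j)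
  let W : D → (Fin n → ℂ) := fun y i => F i y
  -- Step 1: the evaluations span ℂⁿ
  have hspan : Submodule.span ℂ (Set.range W) = ⊤ := by
    by_contra h
    obtain ⟨f, hf0, hker⟩ :=
      (Submodule.span ℂ (Set.range W)).exists_le_ker_of_lt_top (lt_top_iff_ne_top.2 h)
    have hfy : ∀ y : D, f (W y) = 0 := fun y =>
      hker (Submodule.subset_span ⟨y, rfl⟩)
    set c : Fin n → ℂ := fun i => f (Pi.single i 1) with hc
    have hfv : ∀ v : Fin n → ℂ, f v = ∑ i, v i * c i := by
      intro v
      conv_lhs => rw [pi_eq_sum_univ v, map_sum]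
      simp only [map_smul, smul_eq_mul, hc]
      refine Finset.sum_congr rfl fun i _ => ?_
      congr 2
      funext j
      simp [Pi.single_apply, eq_comm]
    have hg : (∑ i, c i • b i : V) = 0 := by
      have : ((∑ i, c i • b i : V) : D → ℂ) = 0 := by
        funext y
        have := hfy y
        rw [hfv] at this
        simpa [W, F, mul_comm] using this
      exact Subtype.ext this
    have hc0 : ∀ i, c i = 0 := by
      have := Fintype.linearIndependent_iff.1 b.linearIndependent c hg
      exact this
    apply hf0
    apply LinearMap.ext
    intro v
    rw [hfv]
    simp [hc0]
  -- Step 2: extract n points with invertible evaluation matrix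
  obtain ⟨s, hst, hsspan, hsind⟩ := exists_linearIndependent ℂ (Set.range W)
  rw [hspan] at hsspan
  have hsfin : s.Finite := hsind.setFinite
  haveI : Fintype s := hsfin.fintype
  let bs : Module.Basis s ℂ (Fin n → ℂ) := Module.Basis.mk hsind (by rw [Subtype.range_coe, hsspan])
  have hcard : Fintype.card s = n := by
    have := Module.finrank_eq_card_basis bs
    rw [Module.finrank_fin_fun] at this
    omega
  let e : Fin n ≃ s := (Fintype.equivFinOfCardEq hcard).symm
  have hx0ex : ∀ j : Fin n, ∃ y : D, W y = (e j : Fin n → ℂ) := fun j => hst (e j).2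
  choose x0 hx0 using hx0ex
  have hdet0 : (M x0).det ≠ 0 := by
    have hcols : LinearIndependent ℂ (fun j => (M x0).transpose j) := by
      have : (fun j => (M x0).transpose j) = fun j => ((e j : Fin n → ℂ)) := by
        funext j
        funext i
        simpa [M, Matrix.transpose_apply, W] using congrFun (hx0 j) i
      rw [this]
      exact hsind.comp (fun j => e j) e.injective
    have := Matrix.linearIndependent_cols_iff_isUnit.1 hcols
    rw [Matrix.isUnit_iff_isUnit_det] at this
    exact this.ne_zero
  -- Step 3: the determinant function and its supremum
  set g : (Fin n → D) → ℝ := fun x => ‖(M x).det‖ with hgdef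
  choose C hC using fun i => hbdd (F i) (hFmem i)
  set C' : Fin n → ℝ := fun i => max (C i) 0 with hC'
  have hCC' : ∀ i y, ‖F i y‖ ≤ C' i := fun i y =>
    (hC i y).trans (le_max_left _ _)
  have hgB : ∀ x, g x ≤ (Fintype.card (Equiv.Perm (Fin n)) : ℝ) * ∏ i, C' i := by
    intro x
    rw [hgdef]
    simp only
    rw [Matrix.det_apply]
    calc ‖∑ σ : Equiv.Perm (Fin n), Equiv.Perm.sign σ • ∏ i, M x (σ i) i‖
        ≤ ∑ σ : Equiv.Perm (Fin n), ‖Equiv.Perm.sign σ • ∏ i, M x (σ i) i‖ :=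
          norm_sum_le _ _
      _ ≤ ∑ _σ : Equiv.Perm (Fin n), ∏ i, C' i := by
          apply Finset.sum_le_sum
          intro σ _
          have h1 : ‖Equiv.Perm.sign σ • ∏ i, M x (σ i) i‖
              = ‖∏ i, M x (σ i) i‖ := by
            rcases Int.units_eq_one_or (Equiv.Perm.sign σ) with h | h <;>
              simp [h, Units.smul_def]
          rw [h1, norm_prod]
          calc (∏ i, ‖M x (σ i) i‖)
              ≤ ∏ i, C' (σ i) := by
                apply Finset.prod_le_prod (fun i _ => norm_nonneg _)
                intro i _
                exact hCC' (σ i) (x i)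
            _ = ∏ i, C' i := Equiv.prod_comp σ C'
      _ = (Fintype.card (Equiv.Perm (Fin n)) : ℝ) * ∏ i, C' i := by
          rw [Finset.sum_const, Finset.card_univ, nsmul_eq_mul]
  have hbdd' : BddAbove (Set.range g) := ⟨_, fun r ⟨x, hx⟩ => hx ▸ hgB x⟩
  set S : ℝ := sSup (Set.range g) with hS
  have hgx0 : 0 < g x0 := by
    rw [hgdef]
    exact norm_pos_iff.2 hdet0
  have hSpos : 0 < S := lt_of_lt_of_le hgx0 (le_csSup hbdd' ⟨x0, rfl⟩)
  have h1ε : (1 : ℝ) < 1 + ε := by linarith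
  haveI : Nonempty (Fin n → D) := ⟨x0⟩
  obtain ⟨_, ⟨x, rfl⟩, hxS⟩ :=
    exists_lt_of_lt_csSup (Set.range_nonempty g) (div_lt_self hSpos h1ε)
  have hgx : 0 < g x := lt_trans (div_pos hSpos (by linarith)) hxS
  have hkey : ∀ z : Fin n → D, g z ≤ (1 + ε) * g x := by
    intro z
    have h1 : g z ≤ S := le_csSup hbdd' ⟨z, rfl⟩
    have h2 : S < (1 + ε) * g x := (div_lt_iff₀' (by linarith)).1 hxS
    linarith
  -- Step 4: define the functions
  set A : Matrix (Fin n) (Fin n) ℂ := M x with hA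
  have hdA : A.det ≠ 0 := fun h => by rw [hgdef] at hgx; simp [← hA, h] at hgx
  refine ⟨fun i y => A.cramer (W y) i / A.det, x, ?_, ?_, ?_⟩
  · -- membership in V
    intro i
    show (fun y => A.cramer (W y) i / A.det) ∈ V
    have heq : (fun y => A.cramer (W y) i / A.det)
        = ∑ j, (A.cramer (Pi.single j 1) i / A.det) • F j := by
      funext y
      have h1 : A.cramer (W y) = ∑ j, W y j • A.cramer (Pi.single j 1) := by
        conv_lhs => rw [pi_eq_sum_univ (W y), map_sum]
        simp only [map_smul]
        refine Finset.sum_congr rfl fun k _ => ?_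
        congr 2
        funext j
        simp [Pi.single_apply, eq_comm]
      rw [h1]
      simp only [Finset.sum_apply, Pi.smul_apply, smul_eq_mul, Finset.sum_div]
      congr 1
      funext j
      field_simp [W]
      ring
    rw [heq]
    exact Submodule.sum_mem _ fun j _ => Submodule.smul_mem _ _ (hFmem j)
  · -- the norm bound
    intro i y
    show ‖A.cramer (W y) i / A.det‖ ≤ 1 + ε
    have hupd : A.updateCol i (W y) = M (Function.update x i y) := by
      funext a c
      by_cases hc : c = i
      · subst hc; simp [Matrix.updateCol_apply, M, W]
      · simp [Matrix.updateCol_apply, hc, M, hA, Function.update_apply]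
    rw [norm_div, Matrix.cramer_apply, hupd]
    rw [div_le_iff₀ (by rw [hgdef] at hgx; exact hgx)]
    have := hkey (Function.update x i y)
    rw [hgdef] at this
    calc ‖(M (Function.update x i y)).det‖
        ≤ (1 + ε) * ‖(M x).det‖ := this
      _ = (1 + ε) * ‖A.det‖ := rfl
  · -- the interpolation property
    intro i j
    show A.cramer (W (x j)) i / A.det = if i = j then 1 else 0
    by_cases hij : i = j
    · subst hij
      have : W (x i) = fun k => A k i := by funext k; rfl
      rw [Matrix.cramer_apply, this, Matrix.updateCol_eq_self, div_self hdA]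
      simp
    · have : W (x j) = fun k => A k j := by funext k; rfl
      rw [Matrix.cramer_apply, this]
      rw [Matrix.det_updateCol_eq_zero (Ne.symm hij)]
      simp [hij]
end

section
/- Conditional error bound for weighted least squares: Let Y ⊂ ℂ^D be a seminormed space, V_m ⊂ Y a finite-dimensional subspace on which ‖·‖_Y is a norm, and suppose points x_1,…,x_n ∈ D and weights w_1,…,w_n > 0 satisfy ‖g‖_Y ≤ K·sqrt(Σ_i w_i |g(x_i)|^2) for all g ∈ V_m. Then the weighted least squares projection A(f) = argmin_{g∈V_m} Σ_i w_i|f(x_i)−g(x_i)|^2 is well-defined and satisfies ‖f − A(f)‖_Y ≤ ‖f − g‖_Y + K·sqrt(Σ_i w_i|f(x_i)−g(x_i)|^2) for all f ∈ Y and all g ∈ V_m. -/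
set_option maxHeartbeats 1000000


open Set
open scoped InnerProductSpace

/-- Conditional error bound for weighted least squares: under the discretization inequality
`‖g‖_Y ≤ K·sqrt(Σ_i w_i|g(x_i)|²)` on a finite-dimensional subspace `V` on which `‖·‖_Y` is
a norm, the weighted least squares minimizer is well-defined (exists uniquely) and satisfies
`‖f − A(f)‖_Y ≤ ‖f − g‖_Y + K·sqrt(Σ_i w_i|f(x_i)−g(x_i)|²)` for all `f` and `g ∈ V`. -/
theorem stmt8 {D : Type*} (N : Seminorm ℂ (D → ℂ)) (V : Submodule ℂ (D → ℂ))
    [FiniteDimensional ℂ V]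
    (hnorm : ∀ g ∈ V, N g = 0 → g = 0)
    (n : ℕ) (x : Fin n → D) (w : Fin n → ℝ) (hw : ∀ i, 0 < w i)
    (K : ℝ) (hK : 0 ≤ K)
    (hdisc : ∀ g ∈ V, N g ≤ K * Real.sqrt (∑ i, w i * ‖g (x i)‖ ^ 2)) :
    ∀ f : D → ℂ, ∃ a : D → ℂ,
      a ∈ V ∧
      (∀ g ∈ V, ∑ i, w i * ‖f (x i) - a (x i)‖ ^ 2
          ≤ ∑ i, w i * ‖f (x i) - g (x i)‖ ^ 2) ∧
      (∀ a' ∈ V, (∀ g ∈ V, ∑ i, w i * ‖f (x i) - a' (x i)‖ ^ 2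
          ≤ ∑ i, w i * ‖f (x i) - g (x i)‖ ^ 2) → a' = a) ∧
      (∀ g ∈ V, N (fun y => f y - a y)
          ≤ N (fun y => f y - g y)
            + K * Real.sqrt (∑ i, w i * ‖f (x i) - g (x i)‖ ^ 2)) := by
  intro f
  -- the sampling map into Euclidean space
  set T : (D → ℂ) →ₗ[ℂ] EuclideanSpace ℂ (Fin n) :=
    { toFun := fun u => (WithLp.toLp 2 (fun i => (Real.sqrt (w i) : ℂ) * u (x i)) : EuclideanSpace ℂ (Fin n))
      map_add' := by intro u v; ext i; simp [mul_add]
      map_smul' := by intro c u; ext i; simp; ring } with hT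
  have hTapp : ∀ u i, T u i = (Real.sqrt (w i) : ℂ) * u (x i) := fun u i => rfl
  have hTnormsq : ∀ u : D → ℂ, ‖T u‖ ^ 2 = ∑ i, w i * ‖u (x i)‖ ^ 2 := by
    intro u
    rw [EuclideanSpace.norm_eq, Real.sq_sqrt (by positivity)]
    refine Finset.sum_congr rfl fun i _ => ?_
    rw [hTapp, norm_mul, Complex.norm_real, Real.norm_eq_abs,
      abs_of_nonneg (Real.sqrt_nonneg _), mul_pow, Real.sq_sqrt (hw i).le]
  have hTnorm : ∀ u : D → ℂ, ‖T u‖ = Real.sqrt (∑ i, w i * ‖u (x i)‖ ^ 2) := by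
    intro u
    rw [← hTnormsq, Real.sqrt_sq (norm_nonneg _)]
  -- injectivity of T on V
  have hinj : ∀ u ∈ V, T u = 0 → u = 0 := by
    intro u hu h0
    apply hnorm u hu
    have h1 := hdisc u hu
    have h2 : Real.sqrt (∑ i, w i * ‖u (x i)‖ ^ 2) = 0 := by
      rw [← hTnorm, h0, norm_zero]
    have := h1.trans_eq (by rw [h2, mul_zero])
    exact le_antisymm this (apply_nonneg N u)
  set W : Submodule ℂ (EuclideanSpace ℂ (Fin n)) := V.map T with hW
  haveI : FiniteDimensional ℂ W := Module.Finite.map V T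
  set b : EuclideanSpace ℂ (Fin n) := T f with hb
  set p : EuclideanSpace ℂ (Fin n) := (Submodule.orthogonalProjection W b : EuclideanSpace ℂ (Fin n)) with hp
  have hpW : p ∈ W := (Submodule.orthogonalProjection W b).2
  obtain ⟨a, haV, haT⟩ := hpW
  have hperp : ∀ q ∈ W, ⟪b - p, q⟫_ℂ = 0 := fun q hq => W.starProjection_inner_eq_zero b q hq
  -- Pythagoras: for g ∈ V, ‖b - T g‖² = ‖b - p‖² + ‖p - T g‖²
  have hpyth : ∀ g ∈ V, ‖b - T g‖ ^ 2 = ‖b - p‖ ^ 2 + ‖p - T g‖ ^ 2 := by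
    intro g hg
    have hmem : p - T g ∈ W := by
      exact sub_mem (haT ▸ Submodule.mem_map_of_mem haV) (Submodule.mem_map_of_mem hg)
    have := norm_add_sq_eq_norm_sq_add_norm_sq_of_inner_eq_zero (b - p) (p - T g)
      (hperp _ hmem)
    have h2 : b - p + (p - T g) = b - T g := by abel
    rw [h2] at this
    simpa [sq] using this
  -- residual identity
  have hres : ∀ g : D → ℂ, ‖b - T g‖ ^ 2 = ∑ i, w i * ‖f (x i) - g (x i)‖ ^ 2 := by
    intro g
    rw [← map_sub, hTnormsq]
    rfl
  refine ⟨a, haV, ?_, ?_, ?_⟩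
  · intro g hg
    rw [← hres, ← hres, haT]
    rw [hpyth g hg]
    nlinarith [sq_nonneg ‖p - T g‖]
  · intro a' ha' hmin
    have h1 : ‖b - T a'‖ ^ 2 ≤ ‖b - T a‖ ^ 2 := by
      rw [hres, hres]; exact hmin a haV
    rw [hpyth a' ha', haT] at h1
    have h2 : ‖p - T a'‖ = 0 := by
      have hbp : ‖b - p‖ ^ 2 + ‖p - T a'‖ ^ 2 ≤ ‖b - p‖ ^ 2 := by
        simpa [haT] using h1
      nlinarith [norm_nonneg (p - T a'), sq_nonneg ‖p - T a'‖]
    have h3 : T (a' - a) = 0 := by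
      rw [map_sub, haT]
      have := norm_eq_zero.mp h2
      rw [sub_eq_zero] at this
      rw [this, sub_self]
    have := hinj (a' - a) (sub_mem ha' haV) h3
    rwa [sub_eq_zero] at this
  · intro g hg
    have hsplit : (fun y => f y - a y) = (fun y => f y - g y) + (g - a) := by
      funext y; show f y - a y = (f y - g y) + (g y - a y); ring
    have htri : N (fun y => f y - a y) ≤ N (fun y => f y - g y) + N (g - a) := by
      rw [hsplit]; exact map_add_le_add N _ _
    have hga : N (g - a) ≤ K * Real.sqrt (∑ i, w i * ‖(g - a) (x i)‖ ^ 2) :=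
      hdisc _ (sub_mem hg haV)
    have hnorm2 : Real.sqrt (∑ i, w i * ‖(g - a) (x i)‖ ^ 2) = ‖T (g - a)‖ :=
      (hTnorm _).symm
    have hle : ‖T (g - a)‖ ≤ ‖b - T g‖ := by
      have h1 : ‖p - T g‖ ^ 2 ≤ ‖b - T g‖ ^ 2 := by
        rw [hpyth g hg]; nlinarith [sq_nonneg ‖b - p‖]
      have h2 : T (g - a) = -(p - T g) := by rw [map_sub, haT]; abel
      rw [h2, norm_neg]
      exact (pow_le_pow_iff_left₀ (norm_nonneg _) (norm_nonneg _) (by norm_num)).mp h1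
    calc N (fun y => f y - a y) ≤ N (fun y => f y - g y) + N (g - a) := htri
      _ ≤ N (fun y => f y - g y) + K * ‖T (g - a)‖ := by
          rw [← hnorm2]; exact add_le_add_right hga _
      _ ≤ N (fun y => f y - g y) + K * ‖b - T g‖ := by
          exact add_le_add_right (mul_le_mul_of_nonneg_left hle hK) _
      _ = N (fun y => f y - g y) + K * Real.sqrt (∑ i, w i * ‖f (x i) - g (x i)‖ ^ 2) := by
          rw [← hres g, Real.sqrt_sq (norm_nonneg _)]
end

section
/- Curse of dimensionality lower bound for integration of Lipschitz functions: for every quadrature rule Q_n using n nodes x_1,…,x_n ∈ [0,1]^d, the worst-case integration error over F_Lip^d is at least (1/8)·n^{−1/d}. Consequently, for ε ∈ (0, 1/8), any algorithm achieving worst-case integration error ≤ ε on F_Lip^d needs at least (1/(8ε))^d function evaluations. -/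
open MeasureTheory Set ENNReal

/-- The class of functions on the cube `[0,1]^d` that are 1-Lipschitz with respect to the
sup-norm `‖·‖_∞` on `ℝ^d` (which is the norm of `Fin d → ℝ`). -/
def FLipd (d : ℕ) : Set ((Fin d → ℝ) → ℝ) :=
  {f | ∀ x ∈ Icc (0 : Fin d → ℝ) 1, ∀ y ∈ Icc (0 : Fin d → ℝ) 1, |f x - f y| ≤ ‖x - y‖}

lemma key (d n : ℕ) (hd : 0 < d) (hn : 0 < n) (x : Fin n → (Fin d → ℝ)) :
    ∃ f : (Fin d → ℝ) → ℝ, f ∈ FLipd d ∧ (∀ i, f (x i) = 0) ∧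
      (1 / 8) * (n : ℝ) ^ (-(d : ℝ)⁻¹) ≤ ∫ y in Icc (0 : Fin d → ℝ) 1, f y := by
  have hne : (Finset.univ : Finset (Fin n)).Nonempty := by
    have : NeZero n := ⟨hn.ne'⟩; exact Finset.univ_nonempty
  set f : (Fin d → ℝ) → ℝ := fun y => Finset.univ.inf' hne (fun i => dist y (x i)) with hf
  have hfnn : ∀ y, 0 ≤ f y := fun y => Finset.le_inf' hne _ (fun i _ => dist_nonneg)
  have hflip : ∀ y z, f y - f z ≤ dist y z := by
    intro y z
    obtain ⟨i, -, hi⟩ := Finset.exists_mem_eq_inf' hne (fun i => dist z (x i))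
    have h1 : f y ≤ dist y (x i) := Finset.inf'_le _ (Finset.mem_univ i)
    have h2 : dist y (x i) ≤ dist y z + dist z (x i) := dist_triangle _ _ _
    have : f z = dist z (x i) := hi
    linarith
  have hfL : LipschitzWith 1 f := by
    apply LipschitzWith.of_dist_le_mul
    intro y z
    rw [NNReal.coe_one, one_mul, Real.dist_eq, abs_sub_le_iff]
    exact ⟨hflip y z, by simpa [dist_comm] using hflip z y⟩
  have hmem : f ∈ FLipd d := by
    intro a _ b _
    have := hfL.dist_le_mul a b
    rw [NNReal.coe_one, one_mul, Real.dist_eq] at this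
    simpa [dist_eq_norm] using this
  have hzero : ∀ i, f (x i) = 0 := by
    intro i
    refine le_antisymm ?_ (hfnn _)
    have h := Finset.inf'_le (fun j => dist (x i) (x j)) (Finset.mem_univ i)
    rw [dist_self] at h
    exact h
  refine ⟨f, hmem, hzero, ?_⟩
  -- side length
  have hnR : (0:ℝ) < n := by exact_mod_cast hn
  set a : ℝ := ((2 * n : ℝ))⁻¹ ^ ((d : ℝ)⁻¹) with ha
  have h2n : (0:ℝ) < (2*n:ℝ)⁻¹ := by positivity
  have hapos : 0 < a := Real.rpow_pos_of_pos h2n _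
  set r : ℝ := a / 2 with hr
  have hrpos : 0 < r := by positivity
  set A : Set (Fin d → ℝ) := ⋃ i, Metric.ball (x i) r with hA
  have hAmeas : MeasurableSet A :=
    MeasurableSet.iUnion (fun i => Metric.isOpen_ball.measurableSet)
  have had : a ^ d = (2*n:ℝ)⁻¹ := by
    rw [ha, ← Real.rpow_natCast (((2 * n : ℝ))⁻¹ ^ ((d : ℝ)⁻¹)) d, ← Real.rpow_mul h2n.le,
      inv_mul_cancel₀ (by exact_mod_cast hd.ne' : (d:ℝ) ≠ 0), Real.rpow_one]
  have hvolA : volume A ≤ 1/2 := by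
    calc volume A ≤ ∑ i : Fin n, volume (Metric.ball (x i) r) := measure_iUnion_fintype_le _ _
    _ = ∑ i : Fin n, ENNReal.ofReal ((2*r)^(Fintype.card (Fin d))) := by
        simp [Real.volume_pi_ball _ hrpos]
    _ = (n : ℝ≥0∞) * ENNReal.ofReal ((2*n:ℝ)⁻¹) := by
        rw [Finset.sum_const, Finset.card_univ, Fintype.card_fin, nsmul_eq_mul]
        rw [Fintype.card_fin]
        congr 2
        have h2r : 2 * r = a := by rw [hr]; ring
        rw [h2r, had]
    _ = ENNReal.ofReal ((n:ℝ) * (2*n:ℝ)⁻¹) := by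
        rw [ENNReal.ofReal_mul (by positivity)]; simp
    _ = ENNReal.ofReal (1/2 : ℝ) := by
        congr 1; field_simp
    _ = 1/2 := by rw [ENNReal.ofReal_div_of_pos (by norm_num)]; simp
  have hIcc : volume (Icc (0:Fin d → ℝ) 1) = 1 := by rw [Real.volume_Icc_pi]; simp
  set S : Set (Fin d → ℝ) := Icc 0 1 \ A with hS
  have hSmeas : MeasurableSet S := measurableSet_Icc.diff hAmeas
  have hvolS : 1/2 ≤ volume S := by
    have h1 : volume (Icc (0:Fin d → ℝ) 1) - volume A ≤ volume S := le_measure_diff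
    rw [hIcc] at h1
    refine le_trans ?_ h1
    have : (1:ℝ≥0∞) - 1/2 = 1/2 := by
      rw [ENNReal.sub_eq_of_eq_add (by norm_num)]
      exact (ENNReal.add_halves 1).symm
    rw [← this]
    exact tsub_le_tsub_left hvolA 1
  have hvolSfin : volume S ≠ ⊤ := by
    refine ne_top_of_le_ne_top ?_ (measure_mono diff_subset)
    rw [hIcc]; exact one_ne_top
  have hfS : ∀ y ∈ S, r ≤ f y := by
    intro y hy
    refine Finset.le_inf' hne _ (fun i _ => ?_)
    have : y ∉ Metric.ball (x i) r := fun h => hy.2 (mem_iUnion.mpr ⟨i, h⟩)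
    simpa [Metric.mem_ball, not_lt] using this
  have hint : IntegrableOn f (Icc (0:Fin d → ℝ) 1) volume :=
    ContinuousOn.integrableOn_compact isCompact_Icc hfL.continuous.continuousOn
  have hintS : IntegrableOn f S volume := hint.mono_set diff_subset
  have step1 : ∫ y in S, f y ≤ ∫ y in Icc (0:Fin d → ℝ) 1, f y :=
    setIntegral_mono_set hint (Filter.Eventually.of_forall hfnn)
      (HasSubset.Subset.eventuallyLE diff_subset)
  have step2 : r * (volume S).toReal ≤ ∫ y in S, f y :=
    setIntegral_ge_of_const_le_real hSmeas hvolSfin hfS hintS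
  have htoReal : (1/2 : ℝ) ≤ (volume S).toReal := by
    have := ENNReal.toReal_mono hvolSfin hvolS
    simpa using this
  have step3 : r * (1/2 : ℝ) ≤ r * (volume S).toReal :=
    mul_le_mul_of_nonneg_left htoReal hrpos.le
  -- now a ≥ (1/2) n^{-1/d}
  have hnr : (n:ℝ) ^ (-(d : ℝ)⁻¹) = (n:ℝ)⁻¹ ^ ((d:ℝ)⁻¹) := by
    rw [Real.rpow_neg hnR.le, ← Real.inv_rpow hnR.le]
  have hage : (1/2 : ℝ) * (n:ℝ) ^ (-(d : ℝ)⁻¹) ≤ a := by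
    have hsplit : a = (2:ℝ)⁻¹ ^ ((d:ℝ)⁻¹) * (n:ℝ)⁻¹ ^ ((d:ℝ)⁻¹) := by
      rw [ha, mul_inv, Real.mul_rpow (by norm_num) (by positivity)]
    have hd1 : (d:ℝ)⁻¹ ≤ 1 := by
      have h1 : (1:ℝ) ≤ d := by exact_mod_cast hd
      calc (d:ℝ)⁻¹ ≤ 1⁻¹ := by
            apply inv_anti₀ one_pos h1
      _ = 1 := inv_one
    have h2 : (1/2 : ℝ) ≤ (2:ℝ)⁻¹ ^ ((d:ℝ)⁻¹) := by
      calc (1/2:ℝ) = (2:ℝ) ^ (-1:ℝ) := by rw [Real.rpow_neg_one]; norm_num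
      _ ≤ (2:ℝ) ^ (-(d:ℝ)⁻¹) := Real.rpow_le_rpow_of_exponent_le (by norm_num) (by linarith)
      _ = (2:ℝ)⁻¹ ^ ((d:ℝ)⁻¹) := by
          rw [Real.rpow_neg (by norm_num : (0:ℝ) ≤ 2), ← Real.inv_rpow (by norm_num : (0:ℝ) ≤ 2)]
    rw [hsplit, hnr]
    have : (0:ℝ) ≤ (n:ℝ)⁻¹ ^ ((d:ℝ)⁻¹) := Real.rpow_nonneg (by positivity) _
    nlinarith
  calc (1/8) * (n:ℝ) ^ (-(d : ℝ)⁻¹) = (1/2 * (n:ℝ) ^ (-(d : ℝ)⁻¹)) / 4 := by ring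
  _ ≤ a / 4 := by linarith
  _ = r * (1/2) := by rw [hr]; ring
  _ ≤ r * (volume S).toReal := step3
  _ ≤ ∫ y in S, f y := step2
  _ ≤ _ := step1

lemma part1_s15 (d : ℕ) (hd : 0 < d) (n : ℕ) (x : Fin n → (Fin d → ℝ))
    (hx : ∀ i, x i ∈ Icc (0 : Fin d → ℝ) 1) (φ : (Fin n → ℝ) → ℝ) :
    ∃ f ∈ FLipd d,
      (1 / 8) * (n : ℝ) ^ (-(d : ℝ)⁻¹)
        ≤ |(∫ y in Icc (0 : Fin d → ℝ) 1, f y) - φ (fun i => f (x i))| := by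
  rcases Nat.eq_zero_or_pos n with hn | hn
  · subst hn
    refine ⟨0, fun a _ b _ => by simp, ?_⟩
    rw [Nat.cast_zero, Real.zero_rpow (by simp [hd.ne'] : -(d:ℝ)⁻¹ ≠ 0)]
    simpa using abs_nonneg _
  · obtain ⟨f, hmem, hzero, hint⟩ := key d n hd hn x
    set B := (1 / 8) * (n : ℝ) ^ (-(d : ℝ)⁻¹) with hB
    set I := ∫ y in Icc (0 : Fin d → ℝ) 1, f y with hI
    set c := φ (fun i => f (x i)) with hc
    by_cases h : B ≤ |I - c|
    · exact ⟨f, hmem, h⟩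
    · refine ⟨-f, fun a ha b hb => by
        have h := hmem a ha b hb
        have he : (-f) a - (-f) b = -(f a - f b) := by simp; ring
        rw [he, abs_neg]; exact h, ?_⟩
      have heq : (fun i => (-f) (x i)) = (fun i => f (x i)) := by
        funext i; simp [hzero i]
      have hIneg : (∫ y in Icc (0 : Fin d → ℝ) 1, (-f) y) = -I := by
        rw [hI]; simpa using integral_neg f
      rw [heq, hIneg, ← hc]
      push_neg at h
      have habs : |I - c| + |(-I) - c| ≥ 2 * I := by
        have h1 : I - c ≤ |I - c| := le_abs_self _
        have h2 : -(-I - c) ≤ |(-I) - c| := neg_le_abs _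
        linarith
      linarith [habs, h]

lemma part2 (d : ℕ) (hd : 0 < d) (ε : ℝ) (hε : 0 < ε) (hε8 : ε < 1/8)
    (n : ℕ) (x : Fin n → (Fin d → ℝ)) (hx : ∀ i, x i ∈ Icc (0 : Fin d → ℝ) 1)
    (φ : (Fin n → ℝ) → ℝ)
    (hbound : ∀ f ∈ FLipd d,
      |(∫ y in Icc (0 : Fin d → ℝ) 1, f y) - φ (fun i => f (x i))| ≤ ε) :
    (1 / (8 * ε)) ^ d ≤ (n : ℝ) := by
  have hIcc : volume (Icc (0:Fin d → ℝ) 1) = 1 := by rw [Real.volume_Icc_pi]; simp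
  rcases Nat.eq_zero_or_pos n with hn | hn
  · exfalso
    subst hn
    set C := φ (fun i => (0:ℝ)) with hC
    have hf : (fun _ : Fin d → ℝ => C + 1) ∈ FLipd d := fun a _ b _ => by
      simpa using norm_nonneg (a - b)
    have h1 := hbound _ hf
    have hφ : φ (fun i : Fin 0 => C + 1) = C := by
      rw [hC]; congr 1; funext i; exact i.elim0
    rw [setIntegral_const, measureReal_def, hIcc] at h1
    simp only [ENNReal.toReal_one, one_smul] at h1
    rw [hφ] at h1
    simp at h1
    linarith
  · obtain ⟨f, hmem, hge⟩ := part1_s15 d hd n x hx φ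
    have hle : (1 / 8) * (n : ℝ) ^ (-(d : ℝ)⁻¹) ≤ ε := le_trans hge (hbound f hmem)
    have hnR : (0:ℝ) < n := by exact_mod_cast hn
    set t : ℝ := (n : ℝ) ^ (-(d : ℝ)⁻¹) with ht
    have htpos : 0 < t := Real.rpow_pos_of_pos hnR _
    have ht8 : t ≤ 8 * ε := by linarith
    have htd : t ^ d = (n:ℝ)⁻¹ := by
      rw [ht, ← Real.rpow_natCast ((n:ℝ) ^ (-(d : ℝ)⁻¹)) d, ← Real.rpow_mul hnR.le,
        neg_mul, inv_mul_cancel₀ (by exact_mod_cast hd.ne' : (d:ℝ) ≠ 0),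
        Real.rpow_neg_one]
    have hpow : (n:ℝ)⁻¹ ≤ (8*ε)^d := by
      rw [← htd]; exact pow_le_pow_left₀ htpos.le ht8 d
    have h8 : (0:ℝ) < 8*ε := by linarith
    calc (1 / (8 * ε)) ^ d = ((8*ε)^d)⁻¹ := by rw [one_div, inv_pow]
    _ ≤ ((n:ℝ)⁻¹)⁻¹ := inv_anti₀ (by positivity) hpow
    _ = n := inv_inv _


/-- Curse of dimensionality for integration of Lipschitz functions: every quadrature rule
using `n` nodes in `[0,1]^d` has worst-case error at least `(1/8)·n^{-1/d}` on `F_Lip^d`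
(witnessed by some fooling function), and consequently any rule with worst-case error at
most `ε ∈ (0, 1/8)` needs at least `(1/(8ε))^d` function evaluations. -/
theorem stmt15 (d : ℕ) (hd : 0 < d) :
    (∀ (n : ℕ) (x : Fin n → (Fin d → ℝ)), (∀ i, x i ∈ Icc (0 : Fin d → ℝ) 1) →
      ∀ φ : (Fin n → ℝ) → ℝ,
        ∃ f ∈ FLipd d,
          (1 / 8) * (n : ℝ) ^ (-(d : ℝ)⁻¹)
            ≤ |(∫ y in Icc (0 : Fin d → ℝ) 1, f y) - φ (fun i => f (x i))|) ∧
    (∀ ε : ℝ, 0 < ε → ε < 1 / 8 →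
      ∀ (n : ℕ) (x : Fin n → (Fin d → ℝ)), (∀ i, x i ∈ Icc (0 : Fin d → ℝ) 1) →
        ∀ φ : (Fin n → ℝ) → ℝ,
          (∀ f ∈ FLipd d,
            |(∫ y in Icc (0 : Fin d → ℝ) 1, f y) - φ (fun i => f (x i))| ≤ ε) →
          (1 / (8 * ε)) ^ d ≤ (n : ℝ)) := by
  exact ⟨fun n x hx φ => part1_s15 d hd n x hx φ,
    fun ε hε hε8 n x hx φ hb => part2 d hd ε hε hε8 n x hx φ hb⟩
end

section
/- Lower bound by diagonal extraction (key lemma for entropy bounds): Let D be a set and F ⊂ B(D) bounded. For every δ > 0 and n ∈ ℕ₀ there exist f_0, h_0, …, f_n, h_n ∈ F and x_0, …, x_n ∈ D such that for each k = 0,…,n: f_k(x_j) = h_k(x_j) for all j < k, and |f_k(x_k) − h_k(x_k)| ≥ g_k(F, B(D)) − δ, where g_k denotes the k-th sampling number in the sup-norm. -/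
open scoped ENNReal

/-- The `k`-th sampling number of `F` in the uniform norm (extended-real valued). -/
noncomputable def gsampE {D : Type*} (k : ℕ) (F : Set (D → ℂ)) : ℝ≥0∞ :=
  ⨅ (x : Fin k → D) (Φ : (Fin k → ℂ) → D → ℂ),
    ⨆ f ∈ F, ⨆ y, (‖f y - Φ (fun i => f (x i)) y‖₊ : ℝ≥0∞)

/-- Diagonal extraction lemma: for a bounded class `F ⊂ B(D)`, every `δ > 0` and `n`,
there are `f_0,h_0,…,f_n,h_n ∈ F` and points `x_0,…,x_n ∈ D` such that `f_k` and `h_k`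
agree at `x_j` for `j < k` while `|f_k(x_k) − h_k(x_k)| ≥ g_k(F, B(D)) − δ`. -/
theorem stmt16 {D : Type*} [Nonempty D] (F : Set (D → ℂ)) (hne : F.Nonempty)
    (hbdd : ∃ C : ℝ, ∀ f ∈ F, ∀ x, ‖f x‖ ≤ C)
    (δ : ℝ) (hδ : 0 < δ) (n : ℕ) :
    ∃ (f h : Fin (n + 1) → D → ℂ) (x : Fin (n + 1) → D),
      (∀ k, f k ∈ F ∧ h k ∈ F) ∧
      (∀ k j : Fin (n + 1), j < k → f k (x j) = h k (x j)) ∧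
      (∀ k : Fin (n + 1),
        gsampE (k : ℕ) F ≤ ENNReal.ofReal (‖f k (x k) - h k (x k)‖ + δ)) := by
  classical
  obtain ⟨f0, hf0⟩ := hne
  obtain ⟨C, hC⟩ := hbdd
  -- the key one-step lemma
  have step : ∀ (k : ℕ) (xs : Fin k → D), ∃ (f h : D → ℂ) (y : D),
      f ∈ F ∧ h ∈ F ∧ (∀ i : Fin k, f (xs i) = h (xs i)) ∧
      gsampE k F ≤ ENNReal.ofReal (‖f y - h y‖ + δ) := by
    intro k xs
    set P : Set ((D → ℂ) × (D → ℂ)) :=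
      {p | p.1 ∈ F ∧ p.2 ∈ F ∧ ∀ i : Fin k, p.1 (xs i) = p.2 (xs i)} with hPdef
    have hP0 : ((f0, f0) : (D → ℂ) × (D → ℂ)) ∈ P := ⟨hf0, hf0, fun _ => rfl⟩
    set S : ℝ≥0∞ := ⨆ (p : P) (y : D),
        (‖(p : (D → ℂ) × (D → ℂ)).1 y - (p : (D → ℂ) × (D → ℂ)).2 y‖₊ : ℝ≥0∞) with hSdef
    -- gsampE k F ≤ S  (choose an interpolating algorithm)
    have h1 : gsampE k F ≤ S := by
      rw [gsampE]
      refine le_trans (iInf_le _ xs) ?_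
      refine le_trans
        (iInf_le _ (fun a => if hg : ∃ g, g ∈ F ∧ ∀ i, g (xs i) = a i then hg.choose else f0)) ?_
      refine iSup₂_le fun f hf => ?_
      have hex : ∃ g, g ∈ F ∧ ∀ i, g (xs i) = (fun i => f (xs i)) i := ⟨f, hf, fun _ => rfl⟩
      simp only [dif_pos hex]
      obtain ⟨hg1, hg2⟩ := hex.choose_spec
      have hp : (f, hex.choose) ∈ P := ⟨hf, hg1, fun i => (hg2 i).symm⟩
      rw [hSdef]
      exact le_iSup_of_le ⟨_, hp⟩ le_rfl
    -- S is finite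
    have hC0 : S ≤ ENNReal.ofReal (C + C) := by
      rw [hSdef]
      refine iSup₂_le fun p y => ?_
      rw [← ENNReal.ofReal_coe_nnreal, coe_nnnorm]
      refine ENNReal.ofReal_le_ofReal ?_
      calc ‖(p : (D → ℂ) × (D → ℂ)).1 y - (p : (D → ℂ) × (D → ℂ)).2 y‖
          ≤ ‖(p : (D → ℂ) × (D → ℂ)).1 y‖ + ‖(p : (D → ℂ) × (D → ℂ)).2 y‖ := norm_sub_le _ _
        _ ≤ C + C := by
            have h1 := hC _ p.2.1 y
            have h2 := hC _ p.2.2.1 y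
            exact add_le_add h1 h2
    have hStop : S ≠ ⊤ := (hC0.trans_lt ENNReal.ofReal_lt_top).ne
    -- extract a near-extremal pair
    have key : ∃ (p : P) (y : D),
        S ≤ (‖(p : (D → ℂ) × (D → ℂ)).1 y - (p : (D → ℂ) × (D → ℂ)).2 y‖₊ : ℝ≥0∞)
          + ENNReal.ofReal δ := by
      by_cases hs : S ≤ ENNReal.ofReal δ
      · exact ⟨⟨_, hP0⟩, Classical.arbitrary D, hs.trans le_add_self⟩
      push_neg at hs
      have hδ' : ENNReal.ofReal δ ≠ 0 := (ENNReal.ofReal_pos.mpr hδ).ne'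
      have hS0 : S ≠ 0 := (lt_trans (ENNReal.ofReal_pos.mpr hδ) hs).ne'
      have hlt : S - ENNReal.ofReal δ < S := ENNReal.sub_lt_self hStop hS0 hδ'
      rw [hSdef] at hlt
      obtain ⟨p, hp⟩ := lt_iSup_iff.mp hlt
      obtain ⟨y, hy⟩ := lt_iSup_iff.mp hp
      exact ⟨p, y, tsub_le_iff_right.mp hy.le⟩
    obtain ⟨⟨⟨f, g⟩, hfF, hgF, hagree⟩, y, hSy⟩ := key
    refine ⟨f, g, y, hfF, hgF, hagree, h1.trans (hSy.trans (le_of_eq ?_))⟩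
    rw [ENNReal.ofReal_add (norm_nonneg _) hδ.le, ← ENNReal.ofReal_coe_nnreal,
      coe_nnnorm]
  -- build the sequences by induction
  have main : ∀ m : ℕ, ∃ (f h : ℕ → D → ℂ) (x : ℕ → D),
      (∀ k, k < m → f k ∈ F ∧ h k ∈ F) ∧
      (∀ k, k < m → ∀ j, j < k → f k (x j) = h k (x j)) ∧
      (∀ k, k < m →
        gsampE k F ≤ ENNReal.ofReal (‖f k (x k) - h k (x k)‖ + δ)) := by
    intro m
    induction m with
    | zero =>
        exact ⟨fun _ => f0, fun _ => f0, fun _ => Classical.arbitrary D,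
          fun k hk => absurd hk (Nat.not_lt_zero k),
          fun k hk => absurd hk (Nat.not_lt_zero k),
          fun k hk => absurd hk (Nat.not_lt_zero k)⟩
    | succ m ih =>
        obtain ⟨f, h, x, h1, h2, h3⟩ := ih
        obtain ⟨f', h', y, hf', hh', hagree, hbd⟩ := step m (fun i : Fin m => x i)
        refine ⟨Function.update f m f', Function.update h m h', Function.update x m y,
          ?_, ?_, ?_⟩
        · intro k hk
          rcases Nat.lt_succ_iff_lt_or_eq.mp hk with hk | hk
          · simp only [Function.update_of_ne (Nat.ne_of_lt hk)]
            exact h1 k hk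
          · subst hk
            simp only [Function.update_self]
            exact ⟨hf', hh'⟩
        · intro k hk j hj
          rcases Nat.lt_succ_iff_lt_or_eq.mp hk with hk | hk
          · have hjm : j ≠ m := Nat.ne_of_lt (hj.trans hk)
            simp only [Function.update_of_ne (Nat.ne_of_lt hk), Function.update_of_ne hjm]
            exact h2 k hk j hj
          · subst hk
            have hjm : j ≠ k := Nat.ne_of_lt hj
            simp only [Function.update_self, Function.update_of_ne hjm]
            exact hagree ⟨j, hj⟩
        · intro k hk
          rcases Nat.lt_succ_iff_lt_or_eq.mp hk with hk | hk
          · simp only [Function.update_of_ne (Nat.ne_of_lt hk)]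
            exact h3 k hk
          · subst hk
            simp only [Function.update_self]
            exact hbd
  obtain ⟨f, h, x, h1, h2, h3⟩ := main (n + 1)
  refine ⟨fun k => f k, fun k => h k, fun k => x k, fun k => h1 k k.isLt, ?_, fun k => h3 k k.isLt⟩
  intro k j hjk
  exact h2 k k.isLt j hjk
end
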